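/- Let g be a finite-dimensional real Lie algebra and H an alternating 3-form on g with dH = 0 (for the Chevalley–Eilenberg differential). Then the Courant bracket ⟦(X,ξ),(Y,η)⟧ = ([X,Y], ad*_X η − ad*_Y ξ + H(X,Y,·)) is antisymmetric and satisfies the Jacobi identity; that is, it makes g ⊕ g* into a Lie algebra. -/
import Mathlib


set_option linter.unusedSectionVars false

open scoped TensorProduct

noncomputable section

namespace GKTest

variable {g : Type} [LieRing g] [LieAlgebra ℝ g]

/-- Auxiliary reindexing: `skip2 i j m` is the `m`-th element (0-indexed) of
`{0,…,k} \ {i,j}` when `i < j`. -/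
def skip2 (i j m : ℕ) : ℕ := if m < i then m else if m + 1 < j then m + 1 else m + 2

lemma skip2_le (i j m : ℕ) : skip2 i j m ≤ m + 2 := by
  unfold skip2; split_ifs <;> omega

/-- The argument list `(⁅X i, X j⁆, X₀, …, X̂ᵢ, …, X̂ⱼ, …, X_k)` used in the
Chevalley–Eilenberg formula. -/
def ceArg {k : ℕ} (X : Fin (k + 1) → g) (i j : Fin (k + 1)) : Fin k → g :=
  fun l =>
    if h : (l : ℕ) = 0 then ⁅X i, X j⁆
    else X ⟨skip2 (i : ℕ) (j : ℕ) ((l : ℕ) - 1), by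
      have h1 := skip2_le (i : ℕ) (j : ℕ) ((l : ℕ) - 1)
      have h2 := l.isLt
      omega⟩

/-- The Chevalley–Eilenberg differential of an alternating `k`-form, as a raw function:
`dα(X₀,…,X_k) = ∑_{i<j} (−1)^{i+j} α(⁅X_i,X_j⁆, X₀,…,X̂ᵢ,…,X̂ⱼ,…,X_k)`. -/
def ceD {k : ℕ} (α : g [⋀^Fin k]→ₗ[ℝ] ℝ) (X : Fin (k + 1) → g) : ℝ :=
  ∑ i : Fin (k + 1), ∑ j : Fin (k + 1),
    if (i : ℕ) < (j : ℕ) then (-1 : ℝ) ^ ((i : ℕ) + (j : ℕ)) * α (ceArg X i j) else 0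

lemma upd0 (X Y Z W : g) : Function.update ![X, Y, Z] 0 W = ![W, Y, Z] := by
  funext l; fin_cases l <;> simp [Function.update]

lemma upd1 (X Y Z W : g) : Function.update ![X, Y, Z] 1 W = ![X, W, Z] := by
  funext l; fin_cases l <;> simp [Function.update]

lemma upd2 (X Y Z W : g) : Function.update ![X, Y, Z] 2 W = ![X, Y, W] := by
  funext l; fin_cases l <;> simp [Function.update]

variable (H : g [⋀^Fin 3]→ₗ[ℝ] ℝ)

lemma H_add2 (X Y : g) (a b : g) :
    H ![X, Y, a + b] = H ![X, Y, a] + H ![X, Y, b] := by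
  have h := H.toMultilinearMap.map_update_add ![X, Y, a] 2 a b
  simpa [upd2] using h

lemma H_smul2 (X Y : g) (c : ℝ) (a : g) :
    H ![X, Y, c • a] = c * H ![X, Y, a] := by
  have h := H.toMultilinearMap.map_update_smul ![X, Y, a] 2 c a
  simpa [upd2, smul_eq_mul] using h

lemma H_add0 (X X' Y Z : g) :
    H ![X + X', Y, Z] = H ![X, Y, Z] + H ![X', Y, Z] := by
  have h := H.toMultilinearMap.map_update_add ![X, Y, Z] 0 X X'
  simpa [upd0] using h

lemma H_smul0 (c : ℝ) (X Y Z : g) :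
    H ![c • X, Y, Z] = c * H ![X, Y, Z] := by
  have h := H.toMultilinearMap.map_update_smul ![X, Y, Z] 0 c X
  simpa [upd0, smul_eq_mul] using h

lemma H_add1 (X Y Y' Z : g) :
    H ![X, Y + Y', Z] = H ![X, Y, Z] + H ![X, Y', Z] := by
  have h := H.toMultilinearMap.map_update_add ![X, Y, Z] 1 Y Y'
  simpa [upd1] using h

lemma H_smul1 (c : ℝ) (X Y Z : g) :
    H ![X, c • Y, Z] = c * H ![X, Y, Z] := by
  have h := H.toMultilinearMap.map_update_smul ![X, Y, Z] 1 c Y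
  simpa [upd1, smul_eq_mul] using h

/-- The contraction `ι_Y ι_X H = H(X, Y, ·)` as a linear functional. -/
def hContr (X Y : g) : Module.Dual ℝ g where
  toFun Z := H ![X, Y, Z]
  map_add' a b := H_add2 H X Y a b
  map_smul' c a := by simpa using H_smul2 H X Y c a

@[simp] lemma hContr_apply (X Y Z : g) : hContr H X Y Z = H ![X, Y, Z] := rfl

/-- The dual (second) component of the Courant bracket:
`ad*_X η − ad*_Y ξ + H(X,Y,·)` where `(ad*_X η)(Z) = −η(⁅X,Z⁆)`. -/
def courantDual (a b : g × Module.Dual ℝ g) : Module.Dual ℝ g :=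
  -(b.2 ∘ₗ (LieAlgebra.ad ℝ g a.1 : g →ₗ[ℝ] g)) +
    a.2 ∘ₗ (LieAlgebra.ad ℝ g b.1 : g →ₗ[ℝ] g) + hContr H a.1 b.1

@[simp] lemma courantDual_apply (a b : g × Module.Dual ℝ g) (Z : g) :
    courantDual H a b Z = -(b.2 ⁅a.1, Z⁆) + a.2 ⁅b.1, Z⁆ + H ![a.1, b.1, Z] := by
  simp [courantDual]

/-- The Courant bracket on `g ⊕ g*` (with background closed 3-form `H`), as a bilinear map:
`⟦(X,ξ),(Y,η)⟧ = (⁅X,Y⁆, ad*_X η − ad*_Y ξ + H(X,Y,·))`. -/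
def courant : (g × Module.Dual ℝ g) →ₗ[ℝ] (g × Module.Dual ℝ g) →ₗ[ℝ] (g × Module.Dual ℝ g) :=
  LinearMap.mk₂ ℝ (fun a b => (⁅a.1, b.1⁆, courantDual H a b))
    (fun a a' b => by
      refine Prod.ext (by simp [add_lie]) ?_
      ext Z
      simp [courantDual_apply, add_lie, H_add0, map_add]
      ring)
    (fun c a b => by
      refine Prod.ext (by simp [smul_lie]) ?_
      ext Z
      simp [courantDual_apply, smul_lie, H_smul0, map_smul, smul_eq_mul]
      ring)
    (fun a b b' => by
      refine Prod.ext (by simp [lie_add]) ?_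
      ext Z
      simp [courantDual_apply, lie_add, H_add1, map_add]
      ring)
    (fun c a b => by
      refine Prod.ext (by simp [lie_smul]) ?_
      ext Z
      simp [courantDual_apply, lie_smul, H_smul1, map_smul, smul_eq_mul]
      ring)

@[simp] lemma courant_apply (a b : g × Module.Dual ℝ g) :
    courant H a b = (⁅a.1, b.1⁆, courantDual H a b) := rfl

/-- The natural pairing `⟨(X,ξ),(Y,η)⟩ = ½(η(X) + ξ(Y))` on `g ⊕ g*`. -/
def npair {V : Type} [AddCommGroup V] [Module ℝ V]
    (a b : V × Module.Dual ℝ V) : ℝ :=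
  (b.2 a.1 + a.2 b.1) / 2

/-- The `ℂ`-bilinear extension of an `ℝ`-bilinear map to the complexification. -/
def cxBil {M : Type} [AddCommGroup M] [Module ℝ M]
    (B : M →ₗ[ℝ] M →ₗ[ℝ] M) : (ℂ ⊗[ℝ] M) →ₗ[ℂ] (ℂ ⊗[ℝ] M) →ₗ[ℂ] (ℂ ⊗[ℝ] M) :=
  TensorProduct.curry (((TensorProduct.lift B).baseChange ℂ) ∘ₗ
    (TensorProduct.AlgebraTensorModule.distribBaseChange ℝ ℂ M M).symm.toLinearMap)

/-- The `i`-eigenspace of the `ℂ`-linear extension of `J` in the complexification. -/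
def eigI {M : Type} [AddCommGroup M] [Module ℝ M] (J : M →ₗ[ℝ] M) :
    Submodule ℂ (ℂ ⊗[ℝ] M) :=
  Module.End.eigenspace (J.baseChange ℂ) Complex.I

/-- The `(−i)`-eigenspace (i.e. the complex conjugate of the `i`-eigenspace). -/
def eigIbar {M : Type} [AddCommGroup M] [Module ℝ M] (J : M →ₗ[ℝ] M) :
    Submodule ℂ (ℂ ⊗[ℝ] M) :=
  Module.End.eigenspace (J.baseChange ℂ) (-Complex.I)

/-- A generalized complex structure on a Lie algebra `g` with closed 3-form `H`:
an `ℝ`-linear `J` on `g ⊕ g*` with `J² = −id`, preserving the natural pairing, whose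
`i`-eigenspace in the complexification is closed under the (complexified) Courant bracket. -/
def IsGCS (J : (g × Module.Dual ℝ g) →ₗ[ℝ] (g × Module.Dual ℝ g)) : Prop :=
  (∀ v, J (J v) = -v) ∧
  (∀ u v, npair (J u) (J v) = npair u v) ∧
  (∀ u ∈ eigI J, ∀ v ∈ eigI J, cxBil (courant H) u v ∈ eigI J)

end GKTest

namespace GKTest

variable {g : Type} [LieRing g] [LieAlgebra ℝ g]

lemma ceArg01 (X : Fin 4 → g) : ceArg X 0 1 = ![⁅X 0, X 1⁆, X 2, X 3] := by
  funext l; fin_cases l <;> simp [ceArg, skip2] <;> exact congrArg X (by decide)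
lemma ceArg02 (X : Fin 4 → g) : ceArg X 0 2 = ![⁅X 0, X 2⁆, X 1, X 3] := by
  funext l; fin_cases l <;> simp [ceArg, skip2] <;> exact congrArg X (by decide)
lemma ceArg03 (X : Fin 4 → g) : ceArg X 0 3 = ![⁅X 0, X 3⁆, X 1, X 2] := by
  funext l; fin_cases l <;> simp [ceArg, skip2] <;> exact congrArg X (by decide)
lemma ceArg12 (X : Fin 4 → g) : ceArg X 1 2 = ![⁅X 1, X 2⁆, X 0, X 3] := by
  funext l; fin_cases l <;> simp [ceArg, skip2] <;> exact congrArg X (by decide)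
lemma ceArg13 (X : Fin 4 → g) : ceArg X 1 3 = ![⁅X 1, X 3⁆, X 0, X 2] := by
  funext l; fin_cases l <;> simp [ceArg, skip2] <;> exact congrArg X (by decide)
lemma ceArg23 (X : Fin 4 → g) : ceArg X 2 3 = ![⁅X 2, X 3⁆, X 0, X 1] := by
  funext l; fin_cases l <;> simp [ceArg, skip2] <;> exact congrArg X (by decide)

lemma ceD_eq (H : g [⋀^Fin 3]→ₗ[ℝ] ℝ) (X : Fin 4 → g) :
    ceD H X = -H ![⁅X 0, X 1⁆, X 2, X 3] + H ![⁅X 0, X 2⁆, X 1, X 3]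
      - H ![⁅X 0, X 3⁆, X 1, X 2] - H ![⁅X 1, X 2⁆, X 0, X 3]
      + H ![⁅X 1, X 3⁆, X 0, X 2] - H ![⁅X 2, X 3⁆, X 0, X 1] := by
  unfold ceD
  simp only [Fin.sum_univ_succ, Fin.sum_univ_zero]
  norm_num [(show Fin.succ (2 : Fin 3) = (3 : Fin 4) from rfl),
    (show ((3 : Fin 4) : ℕ) = 3 from rfl),
    ceArg01, ceArg02, ceArg03, ceArg12, ceArg13, ceArg23, Fin.lt_def]
  ring

lemma Hswap01 (H : g [⋀^Fin 3]→ₗ[ℝ] ℝ) (x y z : g) : H ![y, x, z] = -H ![x, y, z] := by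
  have h := H.map_swap ![x, y, z] (show (0 : Fin 3) ≠ 1 by decide)
  rw [← h]; congr 1; funext l; fin_cases l <;> rfl

lemma Hcyc (H : g [⋀^Fin 3]→ₗ[ℝ] ℝ) (x y z : g) : H ![z, x, y] = H ![x, y, z] := by
  have h1 := Hswap01 H x z y
  have h2 := H.map_swap ![x, z, y] (show (1 : Fin 3) ≠ 2 by decide)
  have e : ![x, z, y] ∘ Equiv.swap (1 : Fin 3) 2 = ![x, y, z] := by
    funext l; fin_cases l <;> rfl
  rw [e] at h2
  linarith

/-- The six-term consequence of `dH = 0`. -/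
lemma hH_six (H : g [⋀^Fin 3]→ₗ[ℝ] ℝ) (hH : ∀ X : Fin 4 → g, ceD H X = 0)
    (a b c z : g) :
    H ![⁅a, b⁆, c, z] + H ![⁅b, c⁆, a, z] + H ![⁅c, a⁆, b, z]
      + H ![a, b, ⁅c, z⁆] + H ![b, c, ⁅a, z⁆] + H ![c, a, ⁅b, z⁆] = 0 := by
  have h0 := hH ![a, b, c, z]
  rw [ceD_eq] at h0
  have h : -H ![⁅a, b⁆, c, z] + H ![⁅a, c⁆, b, z] - H ![⁅a, z⁆, b, c]
      - H ![⁅b, c⁆, a, z] + H ![⁅b, z⁆, a, c] - H ![⁅c, z⁆, a, b] = 0 := h0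
  have e1 : H ![⁅a, c⁆, b, z] = -H ![⁅c, a⁆, b, z] := by
    rw [← lie_skew a c]; have := H.map_update_neg ![⁅c,a⁆, b, z] 0 ⁅c,a⁆
    simpa [upd0] using this
  have e2 : H ![⁅a, z⁆, b, c] = H ![b, c, ⁅a, z⁆] := Hcyc H b c ⁅a, z⁆
  have e3 : H ![⁅b, z⁆, a, c] = -H ![c, a, ⁅b, z⁆] := by
    rw [Hcyc H a c ⁅b, z⁆]
    have := Hswap01 H c a ⁅b, z⁆
    linarith [Hswap01 H a c ⁅b, z⁆]
  have e4 : H ![⁅c, z⁆, a, b] = H ![a, b, ⁅c, z⁆] := Hcyc H a b ⁅c, z⁆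
  linarith

/-- For a closed 3-form `H` on a finite-dimensional real Lie algebra `g`,
the Courant bracket is antisymmetric and satisfies the Jacobi identity, i.e. it makes
`g ⊕ g*` into a Lie algebra (it is `ℝ`-bilinear by construction, being bundled as a
bilinear map). -/
theorem courant_isLieBracket
    (g : Type) [LieRing g] [LieAlgebra ℝ g] [FiniteDimensional ℝ g]
    (H : g [⋀^Fin 3]→ₗ[ℝ] ℝ) (hH : ∀ X : Fin 4 → g, ceD H X = 0) :
    (∀ a b : g × Module.Dual ℝ g, courant H a b = -courant H b a) ∧
    (∀ a b c : g × Module.Dual ℝ g,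
      courant H (courant H a b) c + courant H (courant H b c) a +
        courant H (courant H c a) b = 0) := by
  constructor
  · intro a b
    refine Prod.ext (by simp only [courant_apply, Prod.fst_neg]; exact (lie_skew a.1 b.1).symm) ?_
    ext Z
    have hsw := Hswap01 H b.1 a.1 Z
    have hls : a.2 ⁅b.1, Z⁆ = a.2 ⁅b.1, Z⁆ := rfl
    simp only [courant_apply, courantDual_apply, Prod.snd_neg, LinearMap.neg_apply]
    linarith
  · intro a b c
    refine Prod.ext ?_ ?_
    · simp only [courant_apply, Prod.fst_add, Prod.fst_zero]
      have j := lie_jacobi a.1 b.1 c.1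
      rw [← lie_skew ⁅a.1, b.1⁆ c.1, ← lie_skew ⁅b.1, c.1⁆ a.1,
        ← lie_skew ⁅c.1, a.1⁆ b.1,
        show -⁅c.1, ⁅a.1, b.1⁆⁆ + -⁅a.1, ⁅b.1, c.1⁆⁆ + -⁅b.1, ⁅c.1, a.1⁆⁆ =
          -(⁅a.1, ⁅b.1, c.1⁆⁆ + ⁅b.1, ⁅c.1, a.1⁆⁆ + ⁅c.1, ⁅a.1, b.1⁆⁆) from by abel,
        j, neg_zero]
    · ext Z
      simp only [courant_apply, Prod.snd_add, LinearMap.add_apply, courantDual_apply,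
        Prod.snd_zero, LinearMap.zero_apply]
      have ja : a.2 ⁅⁅b.1, c.1⁆, Z⁆ = a.2 ⁅b.1, ⁅c.1, Z⁆⁆ - a.2 ⁅c.1, ⁅b.1, Z⁆⁆ := by
        rw [lie_lie, map_sub]
      have jb : b.2 ⁅⁅c.1, a.1⁆, Z⁆ = b.2 ⁅c.1, ⁅a.1, Z⁆⁆ - b.2 ⁅a.1, ⁅c.1, Z⁆⁆ := by
        rw [lie_lie, map_sub]
      have jc : c.2 ⁅⁅a.1, b.1⁆, Z⁆ = c.2 ⁅a.1, ⁅b.1, Z⁆⁆ - c.2 ⁅b.1, ⁅a.1, Z⁆⁆ := by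
        rw [lie_lie, map_sub]
      linarith [hH_six H hH a.1 b.1 c.1 Z]

end GKTest
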